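/- arXiv:1311.3750 — 2 statements merged into one kernel-verified Lean document; each statement's English description precedes it below -/
import Mathlib

section
/- There is an absolute constant C > 0 such that for all n ∈ ℕ, 0 < δ < 1, ρ = e^{-√δ/n}, and all real x with nx/(2π) within distance δ/2 of an integer (i.e., x ∈ U(n,δ)), the finite Blaschke product b(n,δ,e^{ix}) = (e^{inx} - ρ^n)/(ρ^n e^{inx} - 1) satisfies |b(n,δ,e^{ix}) + 1| ≤ C√δ. -/
open Real Complex

/-- The set `U(n,δ)` from the paper, viewed as a `2π`-periodic subset of `ℝ`. -/
def UU (n : ℕ) (δ : ℝ) : Set ℝ :=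
  {x : ℝ | ∃ j : ℤ, x ∈ Set.Ioo (π * (2 * j - δ) / n) (π * (2 * j + δ) / n)}

theorem littlewood_stmt2 :
    ∃ C > (0 : ℝ), ∀ n : ℕ, 0 < n → ∀ δ : ℝ, 0 < δ → δ < 1 →
      ∀ x ∈ UU n δ,
        ‖(Complex.exp (n * x * Complex.I) - ((Real.exp (-Real.sqrt δ / n) : ℝ) : ℂ) ^ n) /
            (((Real.exp (-Real.sqrt δ / n) : ℝ) : ℂ) ^ n * Complex.exp (n * x * Complex.I) - 1)
          + 1‖ ≤ C * Real.sqrt δ := by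
  refine ⟨2 * π * Real.exp 1, by positivity, ?_⟩
  intro n hn δ hδ0 hδ1 x hx
  obtain ⟨j, hx1, hx2⟩ := hx
  have hnpos : (0 : ℝ) < n := by exact_mod_cast hn
  set t := Real.sqrt δ with ht
  clear_value t
  have ht0 : 0 < t := by rw [ht]; exact Real.sqrt_pos.2 hδ0
  have ht1 : t ≤ 1 := by rw [ht]; exact Real.sqrt_le_one.2 hδ1.le
  have htt : t * t = δ := by rw [ht]; exact Real.mul_self_sqrt hδ0.le
  set θ : ℝ := n * x - 2 * π * j with hθ
  clear_value θ
  -- |θ| ≤ π * δ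
  have hθabs : |θ| ≤ π * δ := by
    rw [hθ, abs_le]
    constructor
    · have := (div_lt_iff₀ hnpos).1 hx1
      nlinarith [this]
    · have := (lt_div_iff₀ hnpos).1 hx2
      nlinarith [this]
  -- rewrite ρⁿ
  set R := Real.exp (-t) with hR
  have hR1 : R < 1 := by
    rw [hR]
    calc R = Real.exp (-t) := rfl
    _ < Real.exp 0 := Real.exp_lt_exp.2 (by linarith)
    _ = 1 := Real.exp_zero
  have hR0 : 0 < R := Real.exp_pos _
  have hRn : ((Real.exp (-t / n) : ℝ) : ℂ) ^ n = (R : ℂ) := by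
    rw [← Complex.ofReal_pow, ← Real.exp_nat_mul]
    congr 2
    field_simp
  -- rewrite exp (n x I)
  have hw : Complex.exp (n * x * Complex.I) = Complex.exp (θ * Complex.I) := by
    have h1 : (↑n * ↑x * Complex.I : ℂ) = ↑θ * Complex.I + ↑j * (2 * ↑π * Complex.I) := by
      push_cast [hθ]; ring
    rw [h1, Complex.exp_add, Complex.exp_int_mul_two_pi_mul_I, mul_one]
  set w : ℂ := Complex.exp (θ * Complex.I) with hwdef
  have hwabs : ‖w‖ = 1 := by
    rw [hwdef, Complex.norm_exp]
    simp
  -- denominator nonzero and bounded below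
  have hden : ‖(R : ℂ) * w - 1‖ ≥ 1 - R := by
    calc ‖(R : ℂ) * w - 1‖ = ‖(1 : ℂ) - (R : ℂ) * w‖ := by rw [norm_sub_rev]
    _ ≥ ‖(1 : ℂ)‖ - ‖(R : ℂ) * w‖ := norm_sub_norm_le _ _
    _ = 1 - R := by
        rw [norm_one, norm_mul, hwabs, mul_one, Complex.norm_real,
          Real.norm_eq_abs, abs_of_pos hR0]
  have h1R : 0 < 1 - R := by linarith
  have hdnz : (R : ℂ) * w - 1 ≠ 0 := by
    intro h
    rw [h] at hden
    simp at hden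
    linarith
  -- algebraic identity
  have halg : (w - (R : ℂ)) / ((R : ℂ) * w - 1) + 1 =
      (1 + (R : ℂ)) * (w - 1) / ((R : ℂ) * w - 1) := by
    rw [div_add_one hdnz]
    congr 1
    ring
  -- numerator bound : ‖w - 1‖ ≤ |θ|
  have hnum : ‖w - 1‖ ≤ |θ| := by
    have hw1 : w - 1 = ((Real.cos θ - 1 : ℝ) : ℂ) + ((Real.sin θ : ℝ) : ℂ) * Complex.I := by
      rw [hwdef, Complex.exp_mul_I, ← Complex.ofReal_cos, ← Complex.ofReal_sin]
      push_cast
      ring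
    have hsq : ‖w - 1‖ ^ 2 ≤ |θ| ^ 2 := by
      rw [hw1, Complex.sq_norm]
      have hnq : Complex.normSq (((Real.cos θ - 1 : ℝ) : ℂ) + ((Real.sin θ : ℝ) : ℂ) * Complex.I)
          = (Real.cos θ - 1) ^ 2 + (Real.sin θ) ^ 2 := by
        rw [Complex.normSq_add_mul_I]
      rw [hnq, _root_.sq_abs]
      have hc := Real.one_sub_sq_div_two_le_cos (x := θ)
      have hs := Real.sin_sq_add_cos_sq θ
      have hexp : (Real.cos θ - 1) ^ 2 + Real.sin θ ^ 2 = 2 - 2 * Real.cos θ := by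
        linear_combination hs
      rw [hexp]
      linarith
    nlinarith [norm_nonneg (w - 1), abs_nonneg θ]
  -- lower bound on 1 - R
  have hlow : t / Real.exp 1 ≤ 1 - R := by
    have h1 : 1 - R = Real.exp (-t) * (Real.exp t - 1) := by
      rw [hR, Real.exp_neg]
      field_simp
    have h2 : t ≤ Real.exp t - 1 := by
      have := Real.add_one_le_exp t
      linarith
    have h3 : Real.exp (-1) ≤ Real.exp (-t) := Real.exp_le_exp.2 (by linarith)
    have h4 : Real.exp (-1) = (Real.exp 1)⁻¹ := Real.exp_neg 1
    have he1 : 0 < Real.exp 1 := Real.exp_pos 1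
    calc t / Real.exp 1 = (Real.exp 1)⁻¹ * t := by ring
    _ ≤ Real.exp (-t) * (Real.exp t - 1) := by
        rw [← h4]
        apply mul_le_mul h3 h2 ht0.le (Real.exp_pos _).le
    _ = 1 - R := h1.symm
  -- put it together
  rw [hRn, hw, halg]
  rw [norm_div, norm_mul]
  have hfrac : ‖(1 : ℂ) + (R : ℂ)‖ * ‖w - 1‖ / ‖(R : ℂ) * w - 1‖ ≤
      2 * (π * δ) / (t / Real.exp 1) := by
    apply div_le_div₀ (by positivity)
    · apply mul_le_mul
      · have : ‖(1 : ℂ) + (R : ℂ)‖ = 1 + R := by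
          rw [show ((1 : ℂ) + (R : ℂ)) = ((1 + R : ℝ) : ℂ) by push_cast; ring,
            Complex.norm_real, Real.norm_eq_abs, abs_of_pos (by linarith)]
        rw [this]; linarith
      · exact le_trans hnum hθabs
      · exact norm_nonneg _
      · linarith
    · positivity
    · exact le_trans hlow hden
  refine le_trans hfrac ?_
  rw [div_div_eq_mul_div, div_le_iff₀ ht0]
  have he1 : 0 < Real.exp 1 := Real.exp_pos 1
  have : 2 * (π * δ) * Real.exp 1 = 2 * π * Real.exp 1 * (t * t) := by
    rw [htt]; ring
  rw [this]
  have hπ : 0 < π := Real.pi_pos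
  nlinarith [mul_pos ht0 ht0]
end

section
/- There is an absolute constant C > 0 such that for all n ∈ ℕ, 0 < δ < 1 sufficiently small, ρ = e^{-√δ/n}, and all real x not in U(n, δ^{1/4}), the finite Blaschke product b(n,δ,e^{ix}) = (e^{inx} - ρ^n)/(ρ^n e^{inx} - 1) satisfies |b(n,δ,e^{ix}) - 1| ≤ C δ^{1/4}. -/
open Real Complex

lemma norm_R_exp_sub_one_sq (R θ : ℝ) :
    ‖(R : ℂ) * Complex.exp (θ * Complex.I) - 1‖ ^ 2 = R ^ 2 - 2 * R * Real.cos θ + 1 := by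
  rw [Complex.sq_norm, Complex.normSq_apply]
  simp [Complex.exp_ofReal_mul_I_re, Complex.exp_ofReal_mul_I_im]
  nlinarith [Real.sin_sq_add_cos_sq θ]

set_option maxHeartbeats 1000000 in
theorem littlewood_stmt3 :
    ∃ C > (0 : ℝ), ∃ δ₀ > (0 : ℝ), ∀ n : ℕ, 0 < n → ∀ δ : ℝ, 0 < δ → δ < δ₀ →
      ∀ x : ℝ, x ∉ UU n (δ ^ ((1 : ℝ) / 4)) →
        ‖(Complex.exp (n * x * Complex.I) - ((Real.exp (-Real.sqrt δ / n) : ℝ) : ℂ) ^ n) /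
            (((Real.exp (-Real.sqrt δ / n) : ℝ) : ℂ) ^ n * Complex.exp (n * x * Complex.I) - 1)
          - 1‖ ≤ C * δ ^ ((1 : ℝ) / 4) := by
  refine ⟨2, by norm_num, 1, by norm_num, ?_⟩
  intro n hn δ hδ hδ1 x hx
  have hnR : (0 : ℝ) < n := by exact_mod_cast hn
  set ε := δ ^ ((1 : ℝ) / 4) with hεdef
  have hεpos : 0 < ε := Real.rpow_pos_of_pos hδ _
  have hε1 : ε < 1 := Real.rpow_lt_one hδ.le hδ1 (by norm_num)
  have hsq : ε ^ 2 = Real.sqrt δ := by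
    rw [Real.sqrt_eq_rpow, hεdef, ← Real.rpow_natCast (δ ^ ((1:ℝ)/4)) 2,
      ← Real.rpow_mul hδ.le]
    norm_num
  set t := Real.sqrt δ with htdef
  have ht0 : 0 < t := Real.sqrt_pos.2 hδ
  have ht1 : t ≤ 1 := by
    rw [htdef, show (1:ℝ) = Real.sqrt 1 by simp]
    exact Real.sqrt_le_sqrt hδ1.le
  set R := Real.exp (-t) with hRdef
  have hR0 : 0 < R := Real.exp_pos _
  have hR1 : R < 1 := Real.exp_lt_one_iff.2 (by linarith)
  have hRq : (1:ℝ)/4 ≤ R := by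
    have : Real.exp (-1) ≤ R := Real.exp_le_exp.2 (by linarith)
    have h4 : Real.exp 1 ≤ 4 := by
      have := Real.exp_one_lt_d9
      linarith
    rw [Real.exp_neg] at this
    have : (1:ℝ)/4 ≤ (Real.exp 1)⁻¹ := by
      rw [le_inv_comm₀ (by norm_num) (Real.exp_pos 1)]
      linarith
    linarith
  have h1R : 1 - R ≤ t := by
    have := Real.add_one_le_exp (-t)
    linarith
  -- rewrite ρ^n
  have hpow : ((Real.exp (-Real.sqrt δ / n) : ℝ) : ℂ) ^ n = ((R : ℝ) : ℂ) := by
    rw [← Complex.ofReal_pow, ← Real.exp_nat_mul]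
    congr 1
    rw [hRdef, htdef]
    field_simp
  set θ := (n : ℝ) * x with hθdef
  have hz : (n : ℂ) * x * Complex.I = (θ : ℂ) * Complex.I := by
    push_cast [hθdef]; ring
  set z := Complex.exp ((θ : ℂ) * Complex.I) with hzdef
  -- reduce θ mod 2π
  set j : ℤ := round (θ / (2 * π)) with hjdef
  set α : ℝ := θ - 2 * π * j with hαdef
  have hαπ : |α| ≤ π := by
    have h := abs_sub_round (θ / (2 * π))
    have h2π : (0:ℝ) < 2 * π := by positivity
    have heq : α = (θ / (2 * π) - j) * (2 * π) := by
      rw [hαdef]; field_simp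
    rw [heq, abs_mul, abs_of_pos h2π]
    nlinarith [abs_nonneg (θ / (2 * π) - (j:ℝ)), Real.pi_pos]
  have hαlb : π * ε ≤ |α| := by
    by_contra hcon
    push_neg at hcon
    apply hx
    obtain ⟨h1, h2⟩ := abs_lt.1 hcon
    have hθx : x * (n:ℝ) = α + 2 * π * j := by rw [hαdef, hθdef]; ring
    refine ⟨j, ?_, ?_⟩
    · rw [div_lt_iff₀ hnR, show π * (2 * (j:ℝ) - ε) = 2 * π * j - π * ε by ring, hθx]
      linarith
    · rw [lt_div_iff₀ hnR, show π * (2 * (j:ℝ) + ε) = 2 * π * j + π * ε by ring, hθx]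
      linarith
  have hcosθ : Real.cos θ = Real.cos α := by
    rw [hαdef]
    rw [show θ - 2 * π * j = θ - j * (2 * π) by ring, Real.cos_sub_int_mul_two_pi]
  -- 1 - cos θ ≥ 2 ε²  (since |α| ≥ π ε and cos α ≤ 1 - 2/π² α²)
  have hcosb : Real.cos θ ≤ 1 - 2 * t := by
    have h := Real.cos_le_one_sub_mul_cos_sq hαπ
    have hα2 : (π * ε) ^ 2 ≤ α ^ 2 := by
      rw [← _root_.sq_abs α]
      exact pow_le_pow_left₀ (by positivity) hαlb 2
    have hπ : (0:ℝ) < π := Real.pi_pos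
    have : 2 / π ^ 2 * (π * ε) ^ 2 ≤ 2 / π ^ 2 * α ^ 2 := by
      apply mul_le_mul_of_nonneg_left hα2; positivity
    have hval : 2 / π ^ 2 * (π * ε) ^ 2 = 2 * ε ^ 2 := by
      field_simp
    rw [hcosθ]
    rw [hval] at this
    rw [hsq] at this
    linarith
  -- lower bound on denominator
  have hden2 : ε ^ 2 ≤ ‖(R : ℂ) * z - 1‖ ^ 2 := by
    rw [hzdef, norm_R_exp_sub_one_sq]
    have : R ^ 2 - 2 * R * Real.cos θ + 1 ≥ 2 * R * (1 - Real.cos θ) := by nlinarith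
    have h2 : 2 * R * (1 - Real.cos θ) ≥ 2 * (1/4) * (2 * t) := by nlinarith
    rw [hsq]
    linarith
  have hden : ε ≤ ‖(R : ℂ) * z - 1‖ := by
    nlinarith [norm_nonneg ((R : ℂ) * z - 1), hεpos]
  have hdne : (R : ℂ) * z - 1 ≠ 0 := by
    intro h
    rw [h, norm_zero] at hden
    linarith
  -- algebraic identity
  have hnum : (z - (R : ℂ)) / ((R : ℂ) * z - 1) - 1
      = ((1 - (R : ℂ)) * (z + 1)) / ((R : ℂ) * z - 1) := by
    rw [div_sub_one hdne]; congr 1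
    ring
  rw [hz, hpow, ← hzdef, hnum, norm_div, norm_mul]
  have hz1 : ‖z + 1‖ ≤ 2 := by
    calc ‖z + 1‖ ≤ ‖z‖ + ‖(1 : ℂ)‖ := norm_add_le _ _
    _ = 2 := by
      rw [hzdef, Complex.norm_exp_ofReal_mul_I]; norm_num
  have h1Rn : ‖(1 : ℂ) - (R : ℂ)‖ = 1 - R := by
    rw [show (1 : ℂ) - (R : ℂ) = ((1 - R : ℝ) : ℂ) by push_cast; ring,
      Complex.norm_real, Real.norm_eq_abs, _root_.abs_of_nonneg (by linarith : (0:ℝ) ≤ 1 - R)]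
  rw [h1Rn]
  rw [div_le_iff₀ (lt_of_lt_of_le hεpos hden)]
  have key : (1 - R) * ‖z + 1‖ ≤ t * 2 := by
    apply mul_le_mul h1R hz1 (norm_nonneg _) ht0.le
  calc (1 - R) * ‖z + 1‖ ≤ t * 2 := key
    _ = 2 * ε ^ 2 := by rw [hsq]; ring
    _ ≤ 2 * ε * ‖(R : ℂ) * z - 1‖ := by nlinarith
end
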